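/- Let C be a perfect field, C^alg its algebraic closure, 𝒢 = Gal(C^alg/C), and 𝒩 a closed normal subgroup of 𝒢 with 𝒢/𝒩 ≅ G finite. Let K = (C^alg)^𝒩. Then the following are equivalent: (1) there is a nontrivial algebraic field extension K ⊆ K' to which the G-action on K extends; (2) there is a proper closed subgroup 𝒢₀ < 𝒢 with 𝒢₀𝒩 = 𝒢. -/

import Mathlib

open scoped Pointwise

set_option maxHeartbeats 1000000

section Aux

variable {C L : Type*} [Field C] [Field L] [Algebra C L]

theorem myAutInv (e : L ≃ₐ[C] L) : e⁻¹ = e.symm := rfl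

/-- Restrict an automorphism of `L` to a stable intermediate field. -/
def restrictIF (E : IntermediateField C L) (σ : L ≃ₐ[C] L)
    (h : ∀ x ∈ E, σ x ∈ E) (h' : ∀ x ∈ E, σ.symm x ∈ E) : E ≃ₐ[C] E where
  toFun x := ⟨σ x, h x x.2⟩
  invFun x := ⟨σ.symm x, h' x x.2⟩
  left_inv x := by ext; simp
  right_inv x := by ext; simp
  map_mul' x y := by ext; simp
  map_add' x y := by ext; simp
  commutes' c := by ext; simp [IntermediateField.algebraMap_apply]

@[simp] theorem restrictIF_apply (E : IntermediateField C L) (σ : L ≃ₐ[C] L)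
    (h : ∀ x ∈ E, σ x ∈ E) (h' : ∀ x ∈ E, σ.symm x ∈ E) (x : E) :
    (restrictIF E σ h h' x : L) = σ x := rfl

theorem mem_fixedField_iff' (H : Subgroup (L ≃ₐ[C] L)) (x : L) :
    x ∈ IntermediateField.fixedField H ↔ ∀ g ∈ H, g x = x := by
  constructor
  · intro hx g hg
    exact hx ⟨g, hg⟩
  · intro hx g
    exact hx g.1 g.2

/-- Key lemma: the Krull-closed subgroups are fixing subgroups of their fixed
fields (infinite Galois correspondence, hard direction). -/
theorem fixingSubgroup_fixedField_of_isClosed [Normal C L] [Algebra.IsSeparable C L]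
    {H : Subgroup (L ≃ₐ[C] L)} (hH : IsClosed (H : Set (L ≃ₐ[C] L))) :
    IntermediateField.fixingSubgroup (IntermediateField.fixedField H) = H := by
  refine le_antisymm (fun σ hσ => ?_) ((IntermediateField.le_iff_le H _).mp le_rfl)
  suffices hcl : σ ∈ closure (H : Set (L ≃ₐ[C] L)) by
    rwa [hH.closure_eq] at hcl
  rw [mem_closure_iff]
  intro o ho hσo
  -- reduce to a basic neighbourhood of 1
  have h1 : (fun g => σ * g) ⁻¹' o ∈ nhds (1 : L ≃ₐ[C] L) := by
    have : Continuous (fun g : L ≃ₐ[C] L => σ * g) := continuous_mul_left σ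
    refine (this.isOpen_preimage o ho).mem_nhds ?_
    simp [hσo]
  obtain ⟨E, hEfin, hEsub⟩ := (krullTopology_mem_nhds_one_iff C L _).mp h1
  haveI : FiniteDimensional C E := hEfin
  -- pass to the normal closure, a finite Galois subextension
  set E' : IntermediateField C L := IntermediateField.normalClosure C E L with hE'
  haveI : FiniteDimensional C E' := normalClosure.is_finiteDimensional C E L
  haveI : IsGalois C E' := ⟨⟩
  have hEE' : E ≤ E' := IntermediateField.le_normalClosure E
  set π : (L ≃ₐ[C] L) →* (E' ≃ₐ[C] E') := AlgEquiv.restrictNormalHom E'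
  have hπ : ∀ (g : L ≃ₐ[C] L) (x : E'), ((π g x : E') : L) = g (x : L) := fun g x =>
    AlgEquiv.restrictNormalHom_apply E' g x
  -- π σ fixes the fixed field of π(H)
  have hπσ : π σ ∈ H.map π := by
    rw [← IntermediateField.fixingSubgroup_fixedField (H.map π)]
    rw [IntermediateField.mem_fixingSubgroup_iff]
    intro x hx
    have hxL : (x : L) ∈ IntermediateField.fixedField H := by
      rw [mem_fixedField_iff']
      intro g hg
      have := (mem_fixedField_iff' (H.map π) x).mp hx (π g) (Subgroup.mem_map_of_mem π hg)
      calc g (x : L) = ((π g x : E') : L) := (hπ g x).symm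
        _ = (x : L) := by rw [this]
    have hfix : σ (x : L) = (x : L) := hσ ⟨(x : L), hxL⟩
    have : ((π σ x : E') : L) = (x : L) := by rw [hπ σ x, hfix]
    exact Subtype.coe_injective this
  obtain ⟨h, hh, hπh⟩ := hπσ
  refine ⟨h, ?_, hh⟩
  -- h agrees with σ on E', hence on E, so h ∈ σ • Gal(L/E) ⊆ o
  have hmem : σ⁻¹ * h ∈ E.fixingSubgroup := by
    rw [IntermediateField.mem_fixingSubgroup_iff]
    intro y hy
    have hyE' : y ∈ E' := hEE' hy
    have : h y = σ y := by
      calc h y = ((π h ⟨y, hyE'⟩ : E') : L) := (hπ h ⟨y, hyE'⟩).symm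
        _ = ((π σ ⟨y, hyE'⟩ : E') : L) := by rw [hπh]
        _ = σ y := hπ σ ⟨y, hyE'⟩
    show (σ⁻¹ * h) y = y
    rw [AlgEquiv.mul_apply, this, myAutInv, AlgEquiv.symm_apply_apply]
  have := hEsub hmem
  simpa using this

end Aux



/-- Let C be a perfect field, 𝒢 = Gal(C^alg/C), 𝒩 a closed normal
subgroup of 𝒢 of finite index (so 𝒢/𝒩 ≅ G finite) and K = (C^alg)^𝒩 with its
natural G = 𝒢/𝒩 action. The following are equivalent: (1) there is a nontrivial
algebraic extension K ⊆ K' to which the G-action extends; (2) there is a proper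
closed subgroup 𝒢₀ < 𝒢 with 𝒢₀𝒩 = 𝒢. -/
theorem extension_of_action_iff_proper_closed_supplement
    (C : Type*) [Field C] [PerfectField C]
    (𝒩 : Subgroup (AlgebraicClosure C ≃ₐ[C] AlgebraicClosure C))
    [𝒩.Normal] (hclosed : IsClosed (𝒩 : Set (AlgebraicClosure C ≃ₐ[C] AlgebraicClosure C)))
    (hfin : Finite ((AlgebraicClosure C ≃ₐ[C] AlgebraicClosure C) ⧸ 𝒩)) :
    (∃ K' : IntermediateField C (AlgebraicClosure C),
        IntermediateField.fixedField 𝒩 < K' ∧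
        ∃ ρ : ((AlgebraicClosure C ≃ₐ[C] AlgebraicClosure C) ⧸ 𝒩) →* (K' ≃ₐ[C] K'),
          ∀ (σ : AlgebraicClosure C ≃ₐ[C] AlgebraicClosure C) (x : K'),
            (x : AlgebraicClosure C) ∈ IntermediateField.fixedField 𝒩 →
            ((ρ (QuotientGroup.mk σ) x : K') : AlgebraicClosure C) = σ (x : AlgebraicClosure C))
      ↔
    (∃ 𝒢₀ : Subgroup (AlgebraicClosure C ≃ₐ[C] AlgebraicClosure C),
        IsClosed (𝒢₀ : Set (AlgebraicClosure C ≃ₐ[C] AlgebraicClosure C)) ∧ 𝒢₀ ≠ ⊤ ∧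
        𝒢₀ ⊔ 𝒩 = ⊤) := by
  classical
  constructor
  · -- (1) → (2)
    rintro ⟨K', hlt, ρ, hρ⟩
    haveI : 𝒩.FiniteIndex := @Subgroup.finiteIndex_of_finite_quotient _ _ 𝒩 hfin
    have hNopen : IsOpen (𝒩 : Set (AlgebraicClosure C ≃ₐ[C] AlgebraicClosure C)) :=
      Subgroup.isOpen_of_isClosed_of_finiteIndex 𝒩 hclosed
    obtain ⟨E₀, hE₀fin, hE₀sub⟩ := (krullTopology_mem_nhds_one_iff C (AlgebraicClosure C) _).mp
      (hNopen.mem_nhds 𝒩.one_mem)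
    haveI : FiniteDimensional C E₀ := hE₀fin
    have hmul : ∀ a b : AlgebraicClosure C ≃ₐ[C] AlgebraicClosure C,
        (∀ x : K', a (x : AlgebraicClosure C)
            = ((ρ (QuotientGroup.mk a) x : K') : AlgebraicClosure C)) →
        (∀ x : K', b (x : AlgebraicClosure C)
            = ((ρ (QuotientGroup.mk b) x : K') : AlgebraicClosure C)) →
        (∀ x : K', (a * b) (x : AlgebraicClosure C)
            = ((ρ (QuotientGroup.mk (a * b)) x : K') : AlgebraicClosure C)) := by
      intro a b ha hb x
      have hbx := hb x
      have hax := ha (ρ (QuotientGroup.mk b) x)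
      calc (a * b) (x : AlgebraicClosure C) = a (b x) := AlgEquiv.mul_apply a b x
        _ = a ((ρ (QuotientGroup.mk b) x : K') : AlgebraicClosure C) := by rw [hbx]
        _ = ((ρ (QuotientGroup.mk a) (ρ (QuotientGroup.mk b) x) : K') : AlgebraicClosure C) := hax
        _ = ((ρ (QuotientGroup.mk (a * b)) x : K') : AlgebraicClosure C) := by
              rw [QuotientGroup.mk_mul, map_mul, AlgEquiv.mul_apply]
    have hinv : ∀ a : AlgebraicClosure C ≃ₐ[C] AlgebraicClosure C,
        (∀ x : K', a (x : AlgebraicClosure C)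
            = ((ρ (QuotientGroup.mk a) x : K') : AlgebraicClosure C)) →
        (∀ x : K', a⁻¹ (x : AlgebraicClosure C)
            = ((ρ (QuotientGroup.mk a⁻¹) x : K') : AlgebraicClosure C)) := by
      intro a ha x
      have key : ρ (QuotientGroup.mk a) (ρ (QuotientGroup.mk a⁻¹) x) = x := by
        rw [QuotientGroup.mk_inv, ← AlgEquiv.mul_apply, ← map_mul, mul_inv_cancel, map_one,
          AlgEquiv.one_apply]
      have h2 : a ((ρ (QuotientGroup.mk a⁻¹) x : K') : AlgebraicClosure C)
          = (x : AlgebraicClosure C) := by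
        rw [ha (ρ (QuotientGroup.mk a⁻¹) x), key]
      calc a⁻¹ (x : AlgebraicClosure C)
          = a⁻¹ (a ((ρ (QuotientGroup.mk a⁻¹) x : K') : AlgebraicClosure C)) := by rw [h2]
        _ = ((ρ (QuotientGroup.mk a⁻¹) x : K') : AlgebraicClosure C) := by
              rw [myAutInv, AlgEquiv.symm_apply_apply]
    set G₀ : Subgroup (AlgebraicClosure C ≃ₐ[C] AlgebraicClosure C) :=
      { carrier := {σ | ∀ x : K',
          σ (x : AlgebraicClosure C) = ((ρ (QuotientGroup.mk σ) x : K') : AlgebraicClosure C)}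
        mul_mem' := fun {a b} ha hb => hmul a b ha hb
        one_mem' := by intro x; simp
        inv_mem' := fun {a} ha => hinv a ha } with hG₀def
    have hmemG₀ : ∀ σ : AlgebraicClosure C ≃ₐ[C] AlgebraicClosure C, σ ∈ G₀ ↔
        ∀ x : K', σ (x : AlgebraicClosure C)
          = ((ρ (QuotientGroup.mk σ) x : K') : AlgebraicClosure C) := fun σ => Iff.rfl
    refine ⟨G₀, ?_, ?_, ?_⟩
    · -- closedness
      rw [← isOpen_compl_iff]
      rw [isOpen_iff_mem_nhds]
      intro σ hσ
      have hσ' : ∃ x : K', σ (x : AlgebraicClosure C) ≠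
          ((ρ (QuotientGroup.mk σ) x : K') : AlgebraicClosure C) := by
        by_contra hcon
        push_neg at hcon
        exact hσ hcon
      obtain ⟨x, hx⟩ := hσ'
      set E : IntermediateField C (AlgebraicClosure C) :=
        E₀ ⊔ IntermediateField.adjoin C {(x : AlgebraicClosure C)} with hE
      haveI : FiniteDimensional C (IntermediateField.adjoin C {(x : AlgebraicClosure C)}) :=
        IntermediateField.adjoin.finiteDimensional (Algebra.IsIntegral.isIntegral _)
      haveI : FiniteDimensional C E := IntermediateField.finiteDimensional_sup _ _
      have hopen : IsOpen (σ • (E.fixingSubgroup : Set (AlgebraicClosure C ≃ₐ[C] AlgebraicClosure C))) :=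
        (E.fixingSubgroup_isOpen).smul σ
      have hσmem : σ ∈ σ • (E.fixingSubgroup : Set (AlgebraicClosure C ≃ₐ[C] AlgebraicClosure C)) :=
        ⟨1, E.fixingSubgroup.one_mem, by simp⟩
      refine Filter.mem_of_superset (hopen.mem_nhds hσmem) ?_
      rintro τ ⟨u, hu, rfl⟩
      intro hmem'
      have hmem := (hmemG₀ _).mp hmem'
      apply hx
      have hu𝒩 : u ∈ 𝒩 := hE₀sub (IntermediateField.fixingSubgroup_le le_sup_left hu)
      have hux : u (x : AlgebraicClosure C) = (x : AlgebraicClosure C) :=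
        hu ⟨(x : AlgebraicClosure C), le_sup_right (α := IntermediateField C (AlgebraicClosure C))
          (IntermediateField.mem_adjoin_simple_self C (x : AlgebraicClosure C))⟩
      have hmk : (QuotientGroup.mk (σ * u) : _ ⧸ 𝒩) = QuotientGroup.mk σ := by
        rw [QuotientGroup.mk_mul, (QuotientGroup.eq_one_iff u).mpr hu𝒩, mul_one]
      have h1 : (σ * u) (x : AlgebraicClosure C)
          = ((ρ (QuotientGroup.mk (σ * u)) x : K') : AlgebraicClosure C) := hmem x
      rw [AlgEquiv.mul_apply, hux, hmk] at h1
      exact h1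
    · -- proper
      obtain ⟨y, hyK', hyK⟩ := SetLike.exists_of_lt hlt
      intro htop
      apply hyK
      rw [mem_fixedField_iff']
      intro n hn
      have hmem : n ∈ (⊤ : Subgroup (AlgebraicClosure C ≃ₐ[C] AlgebraicClosure C)) :=
        Subgroup.mem_top n
      rw [← htop] at hmem
      have h1 := (hmemG₀ n).mp hmem ⟨y, hyK'⟩
      rwa [(QuotientGroup.eq_one_iff n).mpr hn, map_one, AlgEquiv.one_apply] at h1
    · -- supplement
      rw [eq_top_iff]
      intro σ _
      set τ : AlgebraicClosure C ≃ₐ[C] AlgebraicClosure C :=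
        (ρ (QuotientGroup.mk σ)).liftNormal (AlgebraicClosure C) with hτ
      have hτcomm : ∀ z : K', τ (z : AlgebraicClosure C)
          = ((ρ (QuotientGroup.mk σ) z : K') : AlgebraicClosure C) := by
        intro z
        have := AlgEquiv.liftNormal_commutes (ρ (QuotientGroup.mk σ)) (AlgebraicClosure C) z
        simpa [IntermediateField.algebraMap_apply] using this
      have hKfix : IntermediateField.fixingSubgroup (IntermediateField.fixedField 𝒩) = 𝒩 :=
        fixingSubgroup_fixedField_of_isClosed hclosed
      have hτσ : τ⁻¹ * σ ∈ 𝒩 := by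
        rw [← hKfix, IntermediateField.mem_fixingSubgroup_iff]
        intro y hy
        have hyK' : y ∈ K' := le_of_lt hlt hy
        have h1 : σ y = ((ρ (QuotientGroup.mk σ) ⟨y, hyK'⟩ : K') : AlgebraicClosure C) :=
          (hρ σ ⟨y, hyK'⟩ hy).symm
        have h2 : τ y = ((ρ (QuotientGroup.mk σ) ⟨y, hyK'⟩ : K') : AlgebraicClosure C) :=
          hτcomm ⟨y, hyK'⟩
        show (τ⁻¹ * σ) y = y
        rw [AlgEquiv.mul_apply, h1, ← h2, myAutInv, AlgEquiv.symm_apply_apply]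
      have hmkτ : (QuotientGroup.mk τ : _ ⧸ 𝒩) = QuotientGroup.mk σ :=
        (QuotientGroup.eq (s := 𝒩)).mpr hτσ
      have hτ𝒢₀ : τ ∈ G₀ := by
        rw [hmemG₀]
        intro z
        rw [hmkτ]
        exact hτcomm z
      have hσeq : σ = τ * (τ⁻¹ * σ) := by group
      rw [hσeq]
      exact Subgroup.mul_mem _ (Subgroup.mem_sup_left hτ𝒢₀) (Subgroup.mem_sup_right hτσ)
  · -- (2) → (1)
    rintro ⟨𝒢₀, hG₀closed, hG₀ne, hG₀sup⟩
    set H : Subgroup (AlgebraicClosure C ≃ₐ[C] AlgebraicClosure C) := 𝒢₀ ⊓ 𝒩 with hHdef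
    have hHclosed : IsClosed (H : Set (AlgebraicClosure C ≃ₐ[C] AlgebraicClosure C)) := by
      rw [hHdef, Subgroup.coe_inf]
      exact hG₀closed.inter hclosed
    have hle : IntermediateField.fixedField 𝒩 ≤ IntermediateField.fixedField H := by
      intro x hx
      rw [mem_fixedField_iff'] at hx ⊢
      intro g hg
      exact hx g (Subgroup.mem_inf.mp hg).2
    have hne : IntermediateField.fixedField 𝒩 ≠ IntermediateField.fixedField H := by
      intro heq
      have h2 := congrArg IntermediateField.fixingSubgroup heq
      rw [fixingSubgroup_fixedField_of_isClosed hclosed,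
        fixingSubgroup_fixedField_of_isClosed hHclosed] at h2
      have h𝒩le : 𝒩 ≤ 𝒢₀ := by
        rw [h2]; exact inf_le_left
      apply hG₀ne
      rw [← hG₀sup, sup_eq_left.mpr h𝒩le]
    -- a section of the quotient map living in 𝒢₀
    have hsurj : ∀ q : (AlgebraicClosure C ≃ₐ[C] AlgebraicClosure C) ⧸ 𝒩,
        ∃ g, g ∈ 𝒢₀ ∧ (QuotientGroup.mk g : _ ⧸ 𝒩) = q := by
      intro q
      obtain ⟨σ, rfl⟩ := QuotientGroup.mk_surjective q
      have hσ : σ ∈ ((𝒢₀ : Set (AlgebraicClosure C ≃ₐ[C] AlgebraicClosure C)) * (𝒩 : Set (AlgebraicClosure C ≃ₐ[C] AlgebraicClosure C))) := by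
        rw [← Subgroup.mul_normal, hG₀sup]
        exact Subgroup.mem_top σ
      obtain ⟨g, hg, n, hn, rfl⟩ := hσ
      refine ⟨g, hg, ?_⟩
      rw [QuotientGroup.eq]
      simpa using hn
    choose sec hsec1 hsec2 using hsurj
    -- 𝒢₀ stabilizes the fixed field of H
    have hstab : ∀ g ∈ 𝒢₀, ∀ x ∈ IntermediateField.fixedField H,
        g x ∈ IntermediateField.fixedField H := by
      intro g hg x hx
      rw [mem_fixedField_iff'] at hx ⊢
      intro n hn
      obtain ⟨hn1, hn2⟩ := Subgroup.mem_inf.mp hn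
      have hconj : g⁻¹ * n * g ∈ H := by
        refine Subgroup.mem_inf.mpr ⟨mul_mem (mul_mem (inv_mem hg) hn1) hg, ?_⟩
        simpa using ‹𝒩.Normal›.conj_mem n hn2 g⁻¹
      have h1 := hx _ hconj
      have h2 : g⁻¹ (n (g x)) = x := by simpa [AlgEquiv.mul_apply] using h1
      calc n (g x) = g (g⁻¹ (n (g x))) := by rw [myAutInv, AlgEquiv.apply_symm_apply]
        _ = g x := by rw [h2]
    have hstab' : ∀ g ∈ 𝒢₀, ∀ x ∈ IntermediateField.fixedField H,
        g.symm x ∈ IntermediateField.fixedField H := by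
      intro g hg x hx
      have := hstab g⁻¹ (inv_mem hg) x hx
      rwa [myAutInv] at this
    -- elements of 𝒢₀ in the same coset agree on the fixed field of H
    have hagree : ∀ g g', g ∈ 𝒢₀ → g' ∈ 𝒢₀ →
        (QuotientGroup.mk g : _ ⧸ 𝒩) = QuotientGroup.mk g' →
        ∀ x ∈ IntermediateField.fixedField H, g x = g' x := by
      intro g g' hg hg' hmk x hx
      have hmem : g⁻¹ * g' ∈ H := Subgroup.mem_inf.mpr ⟨mul_mem (inv_mem hg) hg', QuotientGroup.eq.mp hmk⟩
      have h1 := (mem_fixedField_iff' H x).mp hx _ hmem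
      have h2 : g⁻¹ (g' x) = x := by simpa [AlgEquiv.mul_apply] using h1
      calc g x = g (g⁻¹ (g' x)) := by rw [h2]
        _ = g' x := by rw [myAutInv, AlgEquiv.apply_symm_apply]
    refine ⟨IntermediateField.fixedField H, lt_of_le_of_ne hle hne,
      { toFun := fun q => restrictIF (IntermediateField.fixedField H) (sec q)
          (fun x hx => hstab _ (hsec1 q) x hx) (fun x hx => hstab' _ (hsec1 q) x hx)
        map_one' := ?_, map_mul' := ?_ }, ?_⟩
    · apply AlgEquiv.ext
      intro x
      apply Subtype.ext
      have hsH : sec 1 ∈ H := Subgroup.mem_inf.mpr ⟨hsec1 1, (QuotientGroup.eq_one_iff _).mp (hsec2 1)⟩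
      exact (mem_fixedField_iff' H (x : AlgebraicClosure C)).mp x.2 _ hsH
    · intro a b
      apply AlgEquiv.ext
      intro x
      apply Subtype.ext
      show sec (a * b) (x : AlgebraicClosure C) = sec a (sec b (x : AlgebraicClosure C))
      have hmk : (QuotientGroup.mk (sec (a * b)) : _ ⧸ 𝒩)
          = QuotientGroup.mk (sec a * sec b) := by
        rw [hsec2, QuotientGroup.mk_mul, hsec2, hsec2]
      have h1 := hagree (sec (a * b)) (sec a * sec b) (hsec1 _)
        (mul_mem (hsec1 a) (hsec1 b)) hmk (x : AlgebraicClosure C) x.2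
      simpa [AlgEquiv.mul_apply] using h1
    · intro σ x hx
      show sec (QuotientGroup.mk σ) (x : AlgebraicClosure C) = σ (x : AlgebraicClosure C)
      have hmem : (sec (QuotientGroup.mk σ))⁻¹ * σ ∈ 𝒩 := by
        rw [← QuotientGroup.eq]
        exact hsec2 _
      have h1 := (mem_fixedField_iff' 𝒩 (x : AlgebraicClosure C)).mp hx _ hmem
      have h2 : (sec (QuotientGroup.mk σ)).symm (σ (x : AlgebraicClosure C))
          = (x : AlgebraicClosure C) := by
        simpa [AlgEquiv.mul_apply, myAutInv] using h1
      calc sec (QuotientGroup.mk σ) (x : AlgebraicClosure C)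
          = sec (QuotientGroup.mk σ) ((sec (QuotientGroup.mk σ)).symm
              (σ (x : AlgebraicClosure C))) := by rw [h2]
        _ = σ (x : AlgebraicClosure C) := AlgEquiv.apply_symm_apply _ _
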